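/- (Measure theoretic area formula.) Let X be a metric space and μ a Borel regular measure on X that is σ-finite via a countable open cover by sets of finite μ-measure. Let S be a family of closed sets with size function ζ : S → [0,∞) satisfying the doubling-type condition: there exist c, η > 0 such that for every S ∈ S there is S̃ ∈ S with Ŝ ⊆ S̃, diam S̃ ≤ c · diam S and ζ(S̃) ≤ η · ζ(S), where Ŝ = ⋃{T ∈ S : T ∩ S ≠ ∅, diam T ≤ 2 diam S}. Let A ⊆ X be Borel with S_{μ,ζ} covering A finely and F^ζ(μ,·) Borel on A. If ψ_ζ({x ∈ A : F^ζ(μ,x) = 0}) < ∞ and μ({x ∈ A : F^ζ(μ,x) = ∞}) = 0, then for every Borel set B ⊆ A: μ(B) = ∫_B F^ζ(μ,x) dψ_ζ(x). -/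

import Mathlib

open Set Metric MeasureTheory ENNReal Filter Topology

variable {X : Type*}

section Defs
variable [MetricSpace X] [MeasurableSpace X]

/-- The `δ`-approximating pre-measure `ζ_δ` of the Carathéodory construction built from a
family of sets `S` and a size function `ζ`: the infimum of `∑_j ζ(E_j)` over countable
covers of `R` by members `E_j ∈ S` of diameter at most `δ`. -/
noncomputable def caraPre (S : Set (Set X)) (ζ : Set X → ℝ≥0∞) (δ : ℝ≥0∞) (R : Set X) : ℝ≥0∞ :=
  ⨅ (E : ℕ → Set X) (_ : ∀ n, E n ∈ S ∧ EMetric.diam (E n) ≤ δ) (_ : R ⊆ ⋃ n, E n),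
    ∑' n, ζ (E n)

/-- The Carathéodory approximating measure `ψ_ζ = sup_{δ>0} ζ_δ`. -/
noncomputable def psi (S : Set (Set X)) (ζ : Set X → ℝ≥0∞) (R : Set X) : ℝ≥0∞ :=
  ⨆ (δ : ℝ≥0∞) (_ : 0 < δ), caraPre S ζ δ R

/-- The quotient function `Q_{μ,ζ}`. -/
noncomputable def fedQuot (μ : Measure X) (ζ : Set X → ℝ≥0∞) (T : Set X) : ℝ≥0∞ :=
  if ζ T = 0 then ∞ else if ζ T = ∞ then 0 else μ T / ζ T

/-- The family `S_{μ,ζ}`: members of `S` except those on which `ζ` and `μ` both vanish or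
are both infinite. -/
def adm (μ : Measure X) (S : Set (Set X)) (ζ : Set X → ℝ≥0∞) : Set (Set X) :=
  {T ∈ S | ¬ (ζ T = 0 ∧ μ T = 0) ∧ ¬ (ζ T = ∞ ∧ μ T = ∞)}

/-- A family of sets `𝒮` covers finely at `x` (equivalently, the associated covering
relation is fine at `x`). -/
def Fine (𝒮 : Set (Set X)) (x : X) : Prop :=
  ∀ ε : ℝ≥0∞, 0 < ε → ∃ T ∈ 𝒮, x ∈ T ∧ EMetric.diam T < ε

/-- The Federer density `F^ζ(μ,x)`: the covering limsup of `Q_{μ,ζ}` over members of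
`S_{μ,ζ}` containing `x` with diameter tending to `0`. -/
noncomputable def fedDensity (μ : Measure X) (S : Set (Set X)) (ζ : Set X → ℝ≥0∞) (x : X) :
    ℝ≥0∞ :=
  ⨅ (ε : ℝ≥0∞) (_ : 0 < ε),
    ⨆ (T : Set X) (_ : T ∈ adm μ S ζ ∧ x ∈ T ∧ EMetric.diam T < ε), fedQuot μ ζ T

/-- The size function `ζ_α(T) = c_α diam(T)^α`. -/
noncomputable def sizeDiam (c : ℝ≥0∞) (α : ℝ) (T : Set X) : ℝ≥0∞ :=
  c * EMetric.diam T ^ α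

/-- The enlargement `Ŝ = ⋃ {T ∈ S : T ∩ S ≠ ∅, diam T ≤ 2 diam S}`. -/
def hatSet (S : Set (Set X)) (T : Set X) : Set X :=
  ⋃₀ {U | U ∈ S ∧ (U ∩ T).Nonempty ∧ EMetric.diam U ≤ 2 * EMetric.diam T}

/-- The doubling-type condition on the size function `ζ`: there are constants `c, η > 0`
such that every `S ∈ 𝒮` admits `S̃ ∈ 𝒮` with `Ŝ ⊆ S̃`, `diam S̃ ≤ c diam S` and
`ζ(S̃) ≤ η ζ(S)`. -/
def DoublingSize (S : Set (Set X)) (ζ : Set X → ℝ≥0∞) : Prop :=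
  ∃ c η : ℝ≥0∞, 0 < c ∧ c < ∞ ∧ 0 < η ∧ η < ∞ ∧
    ∀ T ∈ S, ∃ T' ∈ S, hatSet S T ⊆ T' ∧
      EMetric.diam T' ≤ c * EMetric.diam T ∧ ζ T' ≤ η * ζ T

end Defs

/-- The family of all closed balls (with positive radius) of a metric space. -/
def closedBallsF (X : Type*) [MetricSpace X] : Set (Set X) :=
  {T | ∃ (x : X) (r : ℝ), 0 < r ∧ T = Metric.closedBall x r}

/-- The family of all closed subsets of a metric space. -/
def closedSetsF (X : Type*) [MetricSpace X] : Set (Set X) := {T | IsClosed T}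

section DefsM
variable [MetricSpace X] [MeasurableSpace X]

/-- A (outer) measure `μ` is Borel regular if every set is contained in a Borel set of the
same measure. -/
def BorelRegular (μ : Measure X) : Prop :=
  ∀ A : Set X, ∃ B : Set X, MeasurableSet B ∧ A ⊆ B ∧ μ A = μ B

/-- There exists a countable open cover of `X` whose elements have finite `μ`-measure. -/
def SigmaFiniteOpen (μ : Measure X) : Prop :=
  ∃ U : ℕ → Set X, (∀ n, IsOpen (U n)) ∧ (⋃ n, U n) = univ ∧ ∀ n, μ (U n) < ∞

/- The Carathéodory-construction measure `ψ_ζ` as a Borel measure, via the metric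
construction (sets outside the family `S` are given infinite size). -/
open Classical in
noncomputable def psiM [MeasurableSpace X] [BorelSpace X] (S : Set (Set X))
    (ζ : Set X → ℝ≥0∞) : Measure X :=
  Measure.mkMetric' (fun T => if T ∈ S then ζ T else ∞)

/-- The upper (centered) spherical density
`Θ^{*α}(μ,x) = limsup_{r→0⁺} μ(B̄(x,r))/(c_α (2r)^α)`. -/
noncomputable def upperSphDensity (μ : Measure X) (c : ℝ≥0∞) (α : ℝ) (x : X) : ℝ≥0∞ :=
  Filter.limsup
    (fun r : ℝ => μ (Metric.closedBall x r) / (c * ENNReal.ofReal (2 * r) ^ α)) (𝓝[>] 0)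

/-- `X` is diametrically regular: for all `x ∈ X`, `R > 0` there is `δ > 0` such that
`t ↦ diam B(y,t)` is continuous on `(0,δ)` for every `y ∈ B̄(x,R)`. -/
def DiamRegular (X : Type*) [MetricSpace X] : Prop :=
  ∀ x : X, ∀ R > (0:ℝ), ∃ δ > (0:ℝ), ∀ y ∈ Metric.closedBall x R,
    ContinuousOn (fun t : ℝ => Metric.diam (Metric.ball y t)) (Ioo 0 δ)

end DefsM


section AuxLemmas
variable [MetricSpace X] [MeasurableSpace X] [BorelSpace X]

open Classical in
/-- The size function extended by `∞` outside of the family `S`. -/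
noncomputable def fedExt (S : Set (Set X)) (ζ : Set X → ℝ≥0∞) : Set X → ℝ≥0∞ :=
  fun T => if T ∈ S then ζ T else ∞

lemma psiM_eq_mkMetric' (S : Set (Set X)) (ζ : Set X → ℝ≥0∞) :
    psiM S ζ = Measure.mkMetric' (fedExt S ζ) := rfl

lemma psiM_apply (S : Set (Set X)) (ζ : Set X → ℝ≥0∞) {B : Set X} (hB : MeasurableSet B) :
    psiM S ζ B = OuterMeasure.mkMetric' (fedExt S ζ) B :=
  toMeasure_apply _ (OuterMeasure.mkMetric'_isMetric _).le_caratheodory hB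

omit [MetricSpace X] [BorelSpace X] in
lemma measurable_of_restrict {A : Set X} (hA : MeasurableSet A) {f : X → ℝ≥0∞}
    (h : Measurable (A.restrict f)) : Measurable (A.indicator f) := by
  have heq : A.indicator f = Function.extend (Subtype.val : A → X) (A.restrict f) 0 := by
    funext x
    by_cases hx : x ∈ A
    · rw [indicator_of_mem hx]
      have := Function.Injective.extend_apply Subtype.coe_injective (A.restrict f) 0 ⟨x, hx⟩
      exact this.symm
    · rw [indicator_of_notMem hx, Function.extend_apply']
      · rfl
      · rintro ⟨⟨y, hy⟩, rfl⟩; exact hx hy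
  rw [heq]
  exact (MeasurableEmbedding.subtype_coe hA).measurable_extend h measurable_const

omit [MetricSpace X] [MeasurableSpace X] [BorelSpace X] in
lemma le_of_forall_one_lt_mul {a b : ℝ≥0∞} (h : ∀ t : ℝ≥0∞, 1 < t → t ≠ ∞ → a ≤ t * b) :
    a ≤ b := by
  by_cases hb : b = ∞
  · exact hb ▸ le_top
  · refine ENNReal.le_of_forall_pos_le_add fun ε hε hbfin => ?_
    have hb1 : (b : ℝ≥0∞) + 1 ≠ ∞ := by simp [hb]
    set t : ℝ≥0∞ := 1 + ε / (b + 1) with ht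
    have ht1 : 1 < t := by
      rw [ht]
      refine ENNReal.lt_add_right one_ne_top ?_
      exact (ENNReal.div_pos (by exact_mod_cast hε.ne') hb1).ne'
    have httop : t ≠ ∞ := by
      rw [ht]
      refine ENNReal.add_ne_top.2 ⟨one_ne_top, ?_⟩
      exact (ENNReal.div_lt_top coe_ne_top (by simp)).ne
    calc a ≤ t * b := h t ht1 httop
    _ = b + (ε / (b + 1)) * b := by rw [ht, add_mul, one_mul]
    _ ≤ b + ε := by
        gcongr
        calc (ε / (b + 1)) * b ≤ (ε / (b + 1)) * (b + 1) := by gcongr; exact le_self_add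
        _ = (ε : ℝ≥0∞) * ((b+1) / (b+1)) := by
            rw [div_eq_mul_inv, mul_assoc, div_eq_mul_inv, mul_comm (b+1)]
        _ ≤ ε := mul_le_of_le_one_right' ENNReal.div_self_le_one

lemma claimA (μ : Measure X) (S : Set (Set X)) (ζ : Set X → ℝ≥0∞)
    (hζ : ∀ T ∈ S, ζ T ≠ ∞) (E : Set X) (s : ℝ≥0∞) (hs0 : s ≠ 0) (hstop : s ≠ ∞)
    (hE : ∀ x ∈ E, fedDensity μ S ζ x < s) :
    μ E ≤ s * OuterMeasure.mkMetric' (fedExt S ζ) E := by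
  classical
  set ν := OuterMeasure.mkMetric' (fedExt S ζ) with hν
  -- if ν E = ∞, trivial
  by_cases hνtop : ν E = ∞
  · rw [hνtop, ENNReal.mul_top hs0]; exact le_top
  set Em : ℕ → Set X := fun m =>
    {x ∈ E | ∀ T, T ∈ adm μ S ζ → x ∈ T → EMetric.diam T < ((m : ℝ≥0∞))⁻¹ →
      fedQuot μ ζ T < s} with hEm
  have hmono : Monotone Em := by
    intro m m' hmm x hx
    refine ⟨hx.1, fun T hT hxT hd => hx.2 T hT hxT (hd.trans_le ?_)⟩
    exact ENNReal.inv_le_inv' (by exact_mod_cast hmm)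
  have hcover : E = ⋃ m, Em m := by
    apply Subset.antisymm
    · intro x hx
      have h1 := hE x hx
      rw [fedDensity] at h1
      obtain ⟨ε, hlt⟩ := iInf_lt_iff.1 h1
      obtain ⟨hε, hlt⟩ := iInf_lt_iff.1 hlt
      obtain ⟨m, hm⟩ := ENNReal.exists_inv_nat_lt hε.ne'
      refine mem_iUnion.2 ⟨m, hx, fun T hT hxT hd => ?_⟩
      refine lt_of_le_of_lt ?_ hlt
      exact le_iSup₂ (f := fun (T : Set X) (_ : T ∈ adm μ S ζ ∧ x ∈ T ∧ EMetric.diam T < ε) =>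
        fedQuot μ ζ T) T ⟨hT, hxT, hd.trans hm⟩
    · exact iUnion_subset fun m => sep_subset _ _
  have hmain : ∀ m, μ (Em m) ≤ s * ν E := by
    intro m
    set r : ℝ≥0∞ := ((m : ℝ≥0∞) + 1)⁻¹ with hr
    have hr0 : 0 < r := ENNReal.inv_pos.2 (by simp)
    have hrm : r < ((m : ℝ≥0∞))⁻¹ := by
      rw [hr]
      exact ENNReal.inv_lt_inv.2 (ENNReal.lt_add_right (by simp) one_ne_zero)
    have hpre_leν : OuterMeasure.mkMetric'.pre (fedExt S ζ) r (Em m) ≤ ν E := by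
      refine le_trans (measure_mono (hcover ▸ subset_iUnion Em m : Em m ⊆ E)) ?_
      have : OuterMeasure.mkMetric'.pre (fedExt S ζ) r ≤ ν := by
        rw [hν, OuterMeasure.mkMetric']
        exact le_iSup₂ (f := fun (r' : ℝ≥0∞) (_ : 0 < r') =>
          OuterMeasure.mkMetric'.pre (fedExt S ζ) r') r hr0
      exact this _
    have hpre_fin : OuterMeasure.mkMetric'.pre (fedExt S ζ) r (Em m) ≠ ∞ :=
      fun h => hνtop (top_le_iff.1 (h ▸ hpre_leν))
    -- main estimate with ε'
    have key : ∀ ε' : ℝ≥0∞, 0 < ε' →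
        μ (Em m) ≤ s * (OuterMeasure.mkMetric'.pre (fedExt S ζ) r (Em m) + ε') := by
      intro ε' hε'
      have hlt : OuterMeasure.mkMetric'.pre (fedExt S ζ) r (Em m) <
          OuterMeasure.mkMetric'.pre (fedExt S ζ) r (Em m) + ε' :=
        ENNReal.lt_add_right hpre_fin hε'.ne'
      rw [OuterMeasure.mkMetric'.pre, OuterMeasure.boundedBy_apply] at hlt
      obtain ⟨f, hfsum⟩ := iInf_lt_iff.1 hlt
      obtain ⟨hfcov, hfsum⟩ := iInf_lt_iff.1 hfsum
      set w : ℕ → ℝ≥0∞ := fun n => ⨆ _ : (f n).Nonempty,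
        MeasureTheory.extend (fun s (_ : EMetric.diam s ≤ r) => fedExt S ζ s) (f n) with hw
      set g : ℕ → Set X := fun n => if (f n ∩ Em m).Nonempty then f n else ∅ with hg
      have hcovg : Em m ⊆ ⋃ n, g n := by
        intro x hx
        obtain ⟨n, hn⟩ := mem_iUnion.1 (hfcov hx)
        refine mem_iUnion.2 ⟨n, ?_⟩
        rw [hg]; simp only
        rw [if_pos ⟨x, hn, hx⟩]
        exact hn
      have hgle : ∀ n, μ (g n) ≤ s * w n := by
        intro n
        by_cases hne : (f n ∩ Em m).Nonempty
        · rw [hg]; simp only; rw [if_pos hne]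
          obtain ⟨x, hxf, hxE⟩ := hne
          have hfne : (f n).Nonempty := ⟨x, hxf⟩
          rw [hw]; simp only
          rw [iSup_pos hfne]
          by_cases hd : EMetric.diam (f n) ≤ r
          · rw [MeasureTheory.extend_eq (fun s (_ : EMetric.diam s ≤ r) => fedExt S ζ s) hd]
            by_cases hfS : f n ∈ S
            · rw [show fedExt S ζ (f n) = ζ (f n) by rw [fedExt, if_pos hfS]]
              by_cases hadm : f n ∈ adm μ S ζ
              · have hQ := hxE.2 (f n) hadm hxf (lt_of_le_of_lt hd hrm)
                rw [fedQuot] at hQ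
                by_cases hz0 : ζ (f n) = 0
                · rw [if_pos hz0] at hQ
                  exact absurd hQ not_top_lt
                · rw [if_neg hz0, if_neg (hζ _ hfS)] at hQ
                  exact ((ENNReal.div_lt_iff (Or.inl hz0) (Or.inl (hζ _ hfS))).1 hQ).le.trans
                    (by rw [mul_comm])
              · have hc : ζ (f n) = 0 ∧ μ (f n) = 0 := by
                  by_contra hc
                  refine hadm ⟨hfS, hc, fun h => hζ _ hfS h.1⟩
                rw [hc.2]; exact zero_le
            · rw [show fedExt S ζ (f n) = ∞ by rw [fedExt, if_neg hfS], ENNReal.mul_top hs0]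
              exact le_top
          · rw [MeasureTheory.extend_eq_top (fun s (_ : EMetric.diam s ≤ r) => fedExt S ζ s) hd, ENNReal.mul_top hs0]; exact le_top
        · rw [hg]; simp only; rw [if_neg hne]
          simp
      calc μ (Em m) ≤ μ (⋃ n, g n) := measure_mono hcovg
      _ ≤ ∑' n, μ (g n) := measure_iUnion_le _
      _ ≤ ∑' n, s * w n := ENNReal.tsum_le_tsum hgle
      _ = s * ∑' n, w n := by rw [ENNReal.tsum_mul_left]
      _ ≤ s * (OuterMeasure.mkMetric'.pre (fedExt S ζ) r (Em m) + ε') := by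
          gcongr
          exact hfsum.le
    -- conclude
    refine ENNReal.le_of_forall_pos_le_add fun ε hε hfin => ?_
    have hsn : s ≠ 0 := hs0
    have h1 : (ε : ℝ≥0∞) / s > 0 := ENNReal.div_pos (by exact_mod_cast hε.ne') hstop
    calc μ (Em m) ≤ s * (OuterMeasure.mkMetric'.pre (fedExt S ζ) r (Em m) + ε / s) :=
          key _ h1
    _ = s * OuterMeasure.mkMetric'.pre (fedExt S ζ) r (Em m) + s * (ε / s) := by
        rw [mul_add]
    _ ≤ s * ν E + ε :=
        add_le_add (by gcongr) ENNReal.mul_div_le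
  calc μ E = μ (⋃ m, Em m) := by rw [← hcover]
  _ = ⨆ m, μ (Em m) := hmono.measure_iUnion
  _ ≤ s * ν E := iSup_le hmain


lemma claimA_le (μ : Measure X) (S : Set (Set X)) (ζ : Set X → ℝ≥0∞)
    (hζ : ∀ T ∈ S, ζ T ≠ ∞) (E : Set X) (s : ℝ≥0∞) (hs0 : s ≠ 0) (hstop : s ≠ ∞)
    (hE : ∀ x ∈ E, fedDensity μ S ζ x ≤ s) :
    μ E ≤ s * OuterMeasure.mkMetric' (fedExt S ζ) E := by
  set o := OuterMeasure.mkMetric' (fedExt S ζ) E with ho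
  by_cases hotop : o = ∞
  · rw [hotop, ENNReal.mul_top hs0]; exact le_top
  refine ENNReal.le_of_forall_pos_le_add fun ε hε hfin => ?_
  set d : ℝ≥0∞ := ε / (o + 1) with hd
  have ho1 : o + 1 ≠ ∞ := ENNReal.add_ne_top.2 ⟨hotop, one_ne_top⟩
  have hd0 : d ≠ 0 := (ENNReal.div_pos (by exact_mod_cast hε.ne') ho1).ne'
  have hdtop : d ≠ ∞ := (ENNReal.div_lt_top coe_ne_top (by simp)).ne
  calc μ E ≤ (s + d) * o := by
        refine claimA μ S ζ hζ E (s + d) ?_ ?_ ?_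
        · exact fun h => hd0 (by simpa [hs0] using (add_eq_zero.1 h).2)
        · exact ENNReal.add_ne_top.2 ⟨hstop, hdtop⟩
        · exact fun x hx => lt_of_le_of_lt (hE x hx)
            (ENNReal.lt_add_right hstop hd0)
  _ = s * o + d * o := by rw [add_mul]
  _ ≤ s * o + ε := by
      gcongr
      calc d * o ≤ d * (o + 1) := by gcongr; exact le_self_add
      _ = (o + 1) * (ε / (o + 1)) := by rw [hd, mul_comm]
      _ ≤ ε := ENNReal.mul_div_le

set_option maxHeartbeats 2000000 in
lemma claimB_open (μ : Measure X) (S : Set (Set X)) (ζ : Set X → ℝ≥0∞)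
    (hS : ∀ T ∈ S, IsClosed T) (hζ : ∀ T ∈ S, ζ T ≠ ∞)
    (c η : ℝ≥0∞) (hctop : c ≠ ∞) (hη0 : η ≠ 0) (hηtop : η ≠ ∞)
    (hdbl : ∀ T ∈ S, ∃ T' ∈ S, hatSet S T ⊆ T' ∧
      EMetric.diam T' ≤ c * EMetric.diam T ∧ ζ T' ≤ η * ζ T)
    (E V : Set X) (hV : IsOpen V) (hVfin : μ V ≠ ∞) (hEV : E ⊆ V)
    (u : ℝ≥0∞) (hu0 : u ≠ 0) (hutop : u ≠ ∞)
    (hdens : ∀ x ∈ E, u < fedDensity μ S ζ x) :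
    u * OuterMeasure.mkMetric' (fedExt S ζ) E ≤ μ V := by
  classical
  suffices h : OuterMeasure.mkMetric' (fedExt S ζ) E ≤ μ V / u by
    calc u * OuterMeasure.mkMetric' (fedExt S ζ) E ≤ u * (μ V / u) := by gcongr
    _ ≤ μ V := ENNReal.mul_div_le
  have happ : OuterMeasure.mkMetric' (fedExt S ζ) E =
      ⨆ (r : ℝ≥0∞) (_ : 0 < r), OuterMeasure.mkMetric'.pre (fedExt S ζ) r E := by
    rw [OuterMeasure.mkMetric']
    simp only [OuterMeasure.iSup_apply]
  rw [happ]
  refine iSup₂_le fun r hr => ?_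
  -- set up the scale δ
  have hc1 : c + 1 ≠ ∞ := ENNReal.add_ne_top.2 ⟨hctop, one_ne_top⟩
  set δ : ℝ≥0∞ := min 1 (r / (c + 1)) with hδ
  have hδ0 : 0 < δ := lt_min one_pos (ENNReal.div_pos hr.ne' hc1)
  have hδtop : δ ≠ ∞ := ((min_le_left _ _).trans_lt one_lt_top).ne
  have hδr : δ ≤ r := by
    refine (min_le_right _ _).trans ?_
    calc r / (c + 1) ≤ r / 1 := by gcongr; exact le_add_self
    _ = r := by simp
  have hcδ : c * δ ≤ r := by
    calc c * δ ≤ (c + 1) * (r / (c + 1)) := by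
          gcongr
          · exact le_add_right le_rfl
          · exact min_le_right _ _
    _ ≤ r := ENNReal.mul_div_le
  -- the fine family
  set 𝔉 : Set (Set X) := {T | T ∈ adm μ S ζ ∧ T ⊆ V ∧ EMetric.diam T ≤ δ ∧
    (T ∩ E).Nonempty ∧ u * ζ T ≤ μ T ∧ 0 < μ T} with h𝔉
  have hfine : ∀ x ∈ E, ∀ ε : ℝ≥0∞, 0 < ε → ∃ T ∈ 𝔉, x ∈ T ∧ EMetric.diam T < ε := by
    intro x hx ε hε
    have hρ : 0 < EMetric.infEdist x Vᶜ := by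
      show 0 < Metric.infEDist x Vᶜ
      rw [EMetric.infEdist_pos_iff_notMem_closure]
      rw [hV.isClosed_compl.closure_eq]
      exact fun h => h (hEV hx)
    set ε₀ : ℝ≥0∞ := min (min ε δ) (EMetric.infEdist x Vᶜ) with hε₀def
    have hε₀ : 0 < ε₀ := lt_min (lt_min hε hδ0) hρ
    have hled : fedDensity μ S ζ x ≤
        ⨆ (T : Set X) (_ : T ∈ adm μ S ζ ∧ x ∈ T ∧ EMetric.diam T < ε₀), fedQuot μ ζ T := by
      rw [fedDensity]
      exact iInf₂_le ε₀ hε₀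
    have hu : u < ⨆ (T : Set X) (_ : T ∈ adm μ S ζ ∧ x ∈ T ∧ EMetric.diam T < ε₀),
        fedQuot μ ζ T := lt_of_lt_of_le (hdens x hx) hled
    obtain ⟨T, hT⟩ := lt_iSup_iff.1 hu
    have hP : T ∈ adm μ S ζ ∧ x ∈ T ∧ EMetric.diam T < ε₀ := by
      by_contra hnP
      rw [iSup_neg hnP] at hT
      exact (not_lt_bot hT)
    rw [iSup_pos hP] at hT
    obtain ⟨hTadm, hxT, hTd⟩ := hP
    have hTS : T ∈ S := hTadm.1
    have hTV : T ⊆ V := by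
      intro y hy
      by_contra hyV
      have h1 : EMetric.infEdist x Vᶜ ≤ edist x y := EMetric.infEdist_le_edist_of_mem hyV
      have h2 : edist x y ≤ EMetric.diam T := EMetric.edist_le_diam_of_mem hxT hy
      exact absurd ((h1.trans h2).trans_lt (hTd.trans_le (min_le_right _ _))) (lt_irrefl _)
    have hmain : u * ζ T ≤ μ T ∧ 0 < μ T := by
      rw [fedQuot] at hT
      by_cases hz0 : ζ T = 0
      · rw [if_pos hz0] at hT
        have hμ0 : μ T ≠ 0 := fun h => hTadm.2.1 ⟨hz0, h⟩
        exact ⟨by simp [hz0], pos_iff_ne_zero.2 hμ0⟩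
      · rw [if_neg hz0, if_neg (hζ _ hTS)] at hT
        have h1 : u * ζ T < μ T :=
          (ENNReal.lt_div_iff_mul_lt (Or.inl hz0) (Or.inl (hζ _ hTS))).1 hT
        exact ⟨h1.le, (ENNReal.mul_pos hu0 hz0).trans h1⟩
    refine ⟨T, ⟨hTadm, hTV, (hTd.trans_le ((min_le_left _ _).trans (min_le_right _ _))).le,
      ⟨x, hxT, hx⟩, hmain.1, hmain.2⟩, hxT, hTd.trans_le ((min_le_left _ _).trans (min_le_left _ _))⟩
  -- Vitali selection
  obtain ⟨G, hGsub, hGdisj, hGcov⟩ :=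
    Vitali.exists_disjoint_subfamily_covering_enlargement (B := (id : Set X → Set X)) 𝔉
      (fun T => Metric.diam T) 2 one_lt_two (fun a _ => Metric.diam_nonneg) δ.toReal
      (fun a ha => ENNReal.toReal_mono hδtop ha.2.2.1)
      (fun a ha => by obtain ⟨y, hy⟩ := ha.2.2.2.1; exact ⟨y, hy.1⟩)
  have hGdiamne : ∀ T ∈ G, EMetric.diam T ≠ ∞ :=
    fun T hT => ((hGsub hT).2.2.1.trans_lt hδtop.lt_top).ne
  have hGcov' : ∀ T ∈ 𝔉, ∃ T' ∈ G, (T ∩ T').Nonempty ∧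
      EMetric.diam T ≤ 2 * EMetric.diam T' := by
    intro T hT
    obtain ⟨T', hT'G, hne, hdle⟩ := hGcov T hT
    refine ⟨T', hT'G, hne, ?_⟩
    have h1 : EMetric.diam T ≠ ∞ := (hT.2.2.1.trans_lt hδtop.lt_top).ne
    have h2 : EMetric.diam T' ≠ ∞ := hGdiamne T' hT'G
    calc EMetric.diam T = ENNReal.ofReal (Metric.diam T) := (ENNReal.ofReal_toReal h1).symm
    _ ≤ ENNReal.ofReal (2 * Metric.diam T') := ENNReal.ofReal_le_ofReal hdle
    _ = ENNReal.ofReal 2 * ENNReal.ofReal (Metric.diam T') := ENNReal.ofReal_mul (by norm_num)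
    _ = 2 * EMetric.diam T' := by
        rw [ENNReal.ofReal_ofNat]
        exact congrArg (fun z => 2 * z) (ENNReal.ofReal_toReal h2)
  -- countability of G
  have hmble : ∀ T : G, MeasurableSet (T : Set X) :=
    fun T => (hS _ (hGsub T.2).1.1).measurableSet
  have hdisj : Pairwise (Function.onFun Disjoint fun T : G => (T : Set X)) :=
    fun T T' hne => hGdisj T.2 T'.2 (fun h => hne (Subtype.ext h))
  have hUV : (⋃ T : G, (T : Set X)) ⊆ V := iUnion_subset fun T => (hGsub T.2).2.1
  have hGcnt : Countable ↥G := by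
    have h := MeasureTheory.Measure.countable_meas_pos_of_disjoint_of_meas_iUnion_ne_top (μ := μ)
      hmble hdisj (fun h => hVfin (top_le_iff.1 (h ▸ measure_mono hUV)))
    have huniv : {i : ↥G | 0 < μ (i : Set X)} = univ :=
      eq_univ_of_forall fun T => (hGsub T.2).2.2.2.2.2
    rw [huniv] at h
    exact countable_univ_iff.1 h
  -- the sum bound
  have hSigmu : ∑' T : G, μ (T : Set X) ≤ μ V := by
    rw [← measure_iUnion hdisj hmble]
    exact measure_mono hUV
  have hSig : ∑' T : G, ζ (T : Set X) ≤ μ V / u := by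
    rw [ENNReal.le_div_iff_mul_le (Or.inl hu0) (Or.inl hutop)]
    calc (∑' T : G, ζ (T : Set X)) * u = ∑' T : G, u * ζ (T : Set X) := by
          exact (mul_comm _ _).trans ENNReal.tsum_mul_left.symm
    _ ≤ ∑' T : G, μ (T : Set X) := ENNReal.tsum_le_tsum fun T => (hGsub T.2).2.2.2.2.1
    _ ≤ μ V := hSigmu
  have hSigfin : ∑' T : G, ζ (T : Set X) ≠ ∞ :=
    (hSig.trans_lt (ENNReal.div_lt_top hVfin hu0)).ne
  -- the enlargement function
  have hdbl' : ∀ T : G, ∃ T' ∈ S, hatSet S (T : Set X) ⊆ T' ∧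
      EMetric.diam T' ≤ c * EMetric.diam (T : Set X) ∧ ζ T' ≤ η * ζ (T : Set X) :=
    fun T => hdbl _ (hGsub T.2).1.1
  set til : ↥G → Set X := fun T => (hdbl' T).choose with htil_def
  have htil : ∀ T : ↥G, til T ∈ S ∧ hatSet S (T : Set X) ⊆ til T ∧
      EMetric.diam (til T) ≤ c * EMetric.diam (T : Set X) ∧ ζ (til T) ≤ η * ζ (T : Set X) :=
    fun T => ⟨(hdbl' T).choose_spec.1, (hdbl' T).choose_spec.2⟩
  -- final estimate
  refine ENNReal.le_of_forall_pos_le_add fun ε hε hfin => ?_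
  have hθ : (0 : ℝ≥0∞) < ε / η := ENNReal.div_pos (by exact_mod_cast hε.ne') hηtop
  obtain ⟨J, hJ⟩ : ∃ J : Finset ↥G, (∑' T : {T : ↥G // T ∉ J}, ζ ((T : ↥G) : Set X)) < ε / η := by
    have h := ENNReal.tendsto_tsum_compl_atTop_zero (f := fun T : ↥G => ζ (T : Set X)) hSigfin
    have := (tendsto_order.1 h).2 _ hθ
    exact this.exists
  set K : ↥G → Set X := fun T => if T ∈ J then (T : Set X) else til T with hK
  have hcovK : E ⊆ ⋃ T : ↥G, K T := by
    intro x hx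
    by_cases hxJ : x ∈ ⋃ T ∈ J, (T : Set X)
    · obtain ⟨T, hTJ, hxT⟩ := mem_iUnion₂.1 hxJ
      exact mem_iUnion.2 ⟨T, by rw [hK]; simp only; rw [if_pos hTJ]; exact hxT⟩
    · set W : Set X := ⋃ T ∈ J, (T : Set X) with hW
      have hWclosed : IsClosed W := isClosed_biUnion_finset fun T _ => hS _ (hGsub T.2).1.1
      have hρ : 0 < EMetric.infEdist x W := by
        show 0 < Metric.infEDist x W
        rw [EMetric.infEdist_pos_iff_notMem_closure, hWclosed.closure_eq]
        exact hxJ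
      obtain ⟨T₀, hT₀𝔉, hxT₀, hdT₀⟩ := hfine x hx _ hρ
      have hT₀W : ∀ y ∈ T₀, y ∉ W := by
        intro y hy hyW
        have h1 : EMetric.infEdist x W ≤ edist x y := EMetric.infEdist_le_edist_of_mem hyW
        have h2 : edist x y ≤ EMetric.diam T₀ := EMetric.edist_le_diam_of_mem hxT₀ hy
        exact absurd ((h1.trans h2).trans_lt hdT₀) (lt_irrefl _)
      obtain ⟨T', hT'G, hTT', hdiam2⟩ := hGcov' T₀ hT₀𝔉
      have hT'J : (⟨T', hT'G⟩ : ↥G) ∉ J := by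
        intro hmem
        obtain ⟨y, hy1, hy2⟩ := hTT'
        exact hT₀W y hy1 (mem_biUnion hmem hy2)
      refine mem_iUnion.2 ⟨⟨T', hT'G⟩, ?_⟩
      rw [hK]; simp only; rw [if_neg hT'J]
      refine (htil ⟨T', hT'G⟩).2.1 ?_
      exact mem_sUnion.2 ⟨T₀, ⟨hT₀𝔉.1.1, hTT', hdiam2⟩, hxT₀⟩
  have hKle : ∀ T : ↥G, OuterMeasure.mkMetric'.pre (fedExt S ζ) r (K T) ≤
      (if T ∈ J then ζ (T : Set X) else η * ζ (T : Set X)) := by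
    intro T
    by_cases hTJ : T ∈ J
    · rw [hK]; simp only; rw [if_pos hTJ, if_pos hTJ]
      refine (OuterMeasure.mkMetric'.pre_le ((hGsub T.2).2.2.1.trans hδr)).trans ?_
      rw [fedExt, if_pos (hGsub T.2).1.1]
    · rw [hK]; simp only; rw [if_neg hTJ, if_neg hTJ]
      have hd : EMetric.diam (til T) ≤ r :=
        ((htil T).2.2.1.trans (by gcongr; exact (hGsub T.2).2.2.1)).trans hcδ
      refine (OuterMeasure.mkMetric'.pre_le hd).trans ?_
      rw [fedExt, if_pos (htil T).1]
      exact (htil T).2.2.2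
  have step1 : OuterMeasure.mkMetric'.pre (fedExt S ζ) r E ≤
      ∑' T : ↥G, OuterMeasure.mkMetric'.pre (fedExt S ζ) r (K T) :=
    (measure_mono hcovK).trans (measure_iUnion_le _)
  have step2 : OuterMeasure.mkMetric'.pre (fedExt S ζ) r E ≤
      ∑' T : ↥G, (if T ∈ J then ζ (T : Set X) else η * ζ (T : Set X)) :=
    step1.trans (ENNReal.tsum_le_tsum hKle)
  have step3 : (∑' T : ↥G, (if T ∈ J then ζ (T : Set X) else η * ζ (T : Set X))) ≤
      (∑' T : ↥G, ζ (T : Set X)) + ∑' T : ↥G, (if T ∈ J then 0 else η * ζ (T : Set X)) := by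
    rw [← ENNReal.tsum_add]
    refine ENNReal.tsum_le_tsum fun T => ?_
    by_cases h : T ∈ J <;> simp [h]
  have step4 : (∑' T : ↥G, (if T ∈ J then 0 else η * ζ (T : Set X)))
      = ∑' T : {T : ↥G // T ∉ J}, η * ζ ((T : ↥G) : Set X) := by
    rw [show (∑' T : ↥G, (if T ∈ J then 0 else η * ζ (T : Set X)))
        = ∑' T : ↥G, Set.indicator {T : ↥G | T ∉ J} (fun T => η * ζ (T : Set X)) T from
      tsum_congr fun T => by by_cases h : T ∈ J <;> simp [h, Set.indicator]]
    exact (tsum_subtype {T : ↥G | T ∉ J} (fun T => η * ζ (T : Set X))).symm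
  have step5 : (∑' T : {T : ↥G // T ∉ J}, η * ζ ((T : ↥G) : Set X)) ≤ ε := by
    rw [ENNReal.tsum_mul_left]
    calc η * ∑' T : {T : ↥G // T ∉ J}, ζ ((T : ↥G) : Set X) ≤ η * (ε / η) :=
          mul_le_mul_right hJ.le η
    _ ≤ ε := ENNReal.mul_div_le
  calc OuterMeasure.mkMetric'.pre (fedExt S ζ) r E
      ≤ (∑' T : ↥G, ζ (T : Set X)) + ∑' T : ↥G, (if T ∈ J then 0 else η * ζ (T : Set X)) :=
        step2.trans step3
  _ ≤ μ V / u + ε := add_le_add hSig (le_of_eq step4 |>.trans step5)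


set_option maxHeartbeats 1000000 in
lemma claimB (μ : Measure X) (S : Set (Set X)) (ζ : Set X → ℝ≥0∞)
    (hS : ∀ T ∈ S, IsClosed T) (hζ : ∀ T ∈ S, ζ T ≠ ∞)
    (c η : ℝ≥0∞) (hctop : c ≠ ∞) (hη0 : η ≠ 0) (hηtop : η ≠ ∞)
    (hdbl : ∀ T ∈ S, ∃ T' ∈ S, hatSet S T ⊆ T' ∧
      EMetric.diam T' ≤ c * EMetric.diam T ∧ ζ T' ≤ η * ζ T)
    (hσ : SigmaFiniteOpen μ) (E : Set X) (hE : MeasurableSet E)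
    (u : ℝ≥0∞) (hu0 : u ≠ 0) (hutop : u ≠ ∞)
    (hdens : ∀ x ∈ E, u < fedDensity μ S ζ x) :
    u * OuterMeasure.mkMetric' (fedExt S ζ) E ≤ μ E := by
  obtain ⟨U, hUopen, hUuniv, hUfin⟩ := hσ
  set D : ℕ → Set X := disjointed U with hD
  have hDmeas : ∀ n, MeasurableSet (D n) :=
    MeasurableSet.disjointed fun n => (hUopen n).measurableSet
  have hDsub : ∀ n, D n ⊆ U n := fun n => disjointed_subset U n
  have hDunion : (⋃ n, D n) = univ := by rw [hD, iUnion_disjointed, hUuniv]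
  set En : ℕ → Set X := fun n => E ∩ D n with hEn
  have hEnmeas : ∀ n, MeasurableSet (En n) := fun n => hE.inter (hDmeas n)
  have hEndisj : Pairwise (Function.onFun Disjoint En) := fun n m hnm =>
    ((disjoint_disjointed U) hnm).mono inter_subset_right inter_subset_right
  have hEnunion : (⋃ n, En n) = E := by
    rw [hEn, ← inter_iUnion, hDunion, inter_univ]
  have hkey : ∀ n, u * OuterMeasure.mkMetric' (fedExt S ζ) (En n) ≤ μ (En n) := by
    intro n
    refine ENNReal.le_of_forall_pos_le_add fun ε hε hfin => ?_
    haveI : IsFiniteMeasure (μ.restrict (U n)) :=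
      ⟨by rw [Measure.restrict_apply_univ]; exact hUfin n⟩
    have hEnfin : μ (En n) ≠ ∞ :=
      (lt_of_le_of_lt (measure_mono ((inter_subset_right).trans (hDsub n))) (hUfin n)).ne
    have h1 : (μ.restrict (U n)) (En n) < μ (En n) + ε := by
      rw [Measure.restrict_apply (hEnmeas n),
        inter_eq_self_of_subset_left ((inter_subset_right).trans (hDsub n))]
      exact ENNReal.lt_add_right hEnfin (by exact_mod_cast hε.ne')
    obtain ⟨W, hWsub, hWopen, hWlt⟩ := Set.exists_isOpen_lt_of_lt (μ := μ.restrict (U n))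
      (En n) _ h1
    set V : Set X := W ∩ U n with hV
    have hVopen : IsOpen V := hWopen.inter (hUopen n)
    have hμV : μ V < μ (En n) + ε := by
      rw [hV, ← Measure.restrict_apply hWopen.measurableSet]
      exact hWlt
    have hVfin : μ V ≠ ∞ :=
      (hμV.trans (ENNReal.add_lt_top.2 ⟨hEnfin.lt_top, ENNReal.coe_lt_top⟩)).ne
    have hEnV : En n ⊆ V :=
      subset_inter hWsub ((inter_subset_right).trans (hDsub n))
    have := claimB_open μ S ζ hS hζ c η hctop hη0 hηtop hdbl (En n) V hVopen hVfin hEnV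
      u hu0 hutop (fun x hx => hdens x hx.1)
    exact this.trans hμV.le
  calc u * OuterMeasure.mkMetric' (fedExt S ζ) E
      ≤ u * ∑' n, OuterMeasure.mkMetric' (fedExt S ζ) (En n) := by
        gcongr
        exact hEnunion ▸ measure_iUnion_le En
  _ = ∑' n, u * OuterMeasure.mkMetric' (fedExt S ζ) (En n) := ENNReal.tsum_mul_left.symm
  _ ≤ ∑' n, μ (En n) := ENNReal.tsum_le_tsum hkey
  _ = μ E := by rw [← measure_iUnion hEndisj hEnmeas, hEnunion]

end AuxLemmas

/-- Measure theoretic area formula. Let `μ` be a Borel regular measure,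
σ-finite via a countable open cover by sets of finite measure, `S` a family of closed sets,
`ζ : S → [0,∞)` satisfying the doubling-type condition, `A` Borel with `S_{μ,ζ}` covering
`A` finely and `F^ζ(μ,·)` Borel on `A`. If `ψ_ζ({F^ζ(μ,·) = 0}) < ∞` and
`μ({F^ζ(μ,·) = ∞}) = 0`, then `μ(B) = ∫_B F^ζ(μ,x) dψ_ζ(x)` for every Borel `B ⊆ A`. -/
theorem stmt6 [MetricSpace X] [MeasurableSpace X] [BorelSpace X]
    (μ : Measure X) (hreg : BorelRegular μ) (hσ : SigmaFiniteOpen μ)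
    (S : Set (Set X)) (hS : ∀ T ∈ S, IsClosed T)
    (ζ : Set X → ℝ≥0∞) (hζ : ∀ T ∈ S, ζ T ≠ ∞)
    (hdb : DoublingSize S ζ)
    (A : Set X) (hA : MeasurableSet A)
    (hfine : ∀ x ∈ A, Fine (adm μ S ζ) x)
    (hmeas : Measurable (A.restrict (fedDensity μ S ζ)))
    (h0 : psiM S ζ {x ∈ A | fedDensity μ S ζ x = 0} < ∞)
    (hinf : μ {x ∈ A | fedDensity μ S ζ x = ∞} = 0) :
    ∀ B ⊆ A, MeasurableSet B →
      μ B = ∫⁻ x in B, fedDensity μ S ζ x ∂(psiM S ζ) := by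
  classical
  intro B hBA hB
  obtain ⟨c, η, hc0, hctop, hη0, hηtop, hdbl⟩ := hdb
  have hψap : ∀ {E : Set X}, MeasurableSet E →
      psiM S ζ E = OuterMeasure.mkMetric' (fedExt S ζ) E := fun hE => psiM_apply S ζ hE
  have hFmeas : Measurable (A.indicator (fedDensity μ S ζ)) := measurable_of_restrict hA hmeas
  -- the zero set and the infinity set
  set Z : Set X := {x ∈ A | fedDensity μ S ζ x = 0} with hZdef
  set Winf : Set X := {x ∈ A | fedDensity μ S ζ x = ∞} with hWdef
  have hZeq : Z = A ∩ (A.indicator (fedDensity μ S ζ)) ⁻¹' {0} := by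
    ext x
    simp only [hZdef, mem_sep_iff, mem_inter_iff, mem_preimage, mem_singleton_iff]
    exact ⟨fun ⟨h1, h2⟩ => ⟨h1, by rw [indicator_of_mem h1]; exact h2⟩,
      fun ⟨h1, h2⟩ => ⟨h1, by rwa [indicator_of_mem h1] at h2⟩⟩
  have hWeq : Winf = A ∩ (A.indicator (fedDensity μ S ζ)) ⁻¹' {∞} := by
    ext x
    simp only [hWdef, mem_sep_iff, mem_inter_iff, mem_preimage, mem_singleton_iff]
    exact ⟨fun ⟨h1, h2⟩ => ⟨h1, by rw [indicator_of_mem h1]; exact h2⟩,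
      fun ⟨h1, h2⟩ => ⟨h1, by rwa [indicator_of_mem h1] at h2⟩⟩
  have hZmeas : MeasurableSet Z := by
    rw [hZeq]; exact hA.inter (hFmeas (measurableSet_singleton 0))
  have hWmeas : MeasurableSet Winf := by
    rw [hWeq]; exact hA.inter (hFmeas (measurableSet_singleton ∞))
  -- ψ of the infinity set vanishes
  have hψW : psiM S ζ Winf = 0 := by
    have h1 := claimB μ S ζ hS hζ c η hctop.ne hη0.ne' hηtop.ne hdbl hσ Winf hWmeas 1
      one_ne_zero one_ne_top (fun x hx => by rw [hx.2]; exact ENNReal.one_lt_top)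
    rw [hψap hWmeas]
    rw [hinf, one_mul] at h1
    exact nonpos_iff_eq_zero.1 h1
  -- μ of the intersection of B with the zero set vanishes
  set Bz : Set X := B ∩ Z with hBzdef
  set Binf : Set X := B ∩ Winf with hBinfdef
  have hBzmeas : MeasurableSet Bz := hB.inter hZmeas
  have hBinfmeas : MeasurableSet Binf := hB.inter hWmeas
  have hμBz : μ Bz = 0 := by
    have hZfin : psiM S ζ Z ≠ ∞ := h0.ne
    have hb : ∀ s : ℝ≥0∞, s ≠ 0 → s ≠ ∞ → μ Bz ≤ s * psiM S ζ Z := by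
      intro s hs0 hstop
      have h1 := claimA μ S ζ hζ Bz s hs0 hstop
        (fun x hx => by rw [hx.2.2]; exact hs0.bot_lt)
      refine h1.trans ?_
      rw [← hψap hBzmeas]
      gcongr
      exact inter_subset_right
    refine nonpos_iff_eq_zero.1 (ENNReal.le_of_forall_pos_le_add fun ε hε _ => ?_)
    rw [zero_add]
    have ho1 : psiM S ζ Z + 1 ≠ ∞ := ENNReal.add_ne_top.2 ⟨hZfin, one_ne_top⟩
    set d : ℝ≥0∞ := ε / (psiM S ζ Z + 1) with hd
    have hd0 : d ≠ 0 := (ENNReal.div_pos (by exact_mod_cast hε.ne') ho1).ne'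
    have hdtop : d ≠ ∞ := (ENNReal.div_lt_top coe_ne_top (by simp)).ne
    calc μ Bz ≤ d * psiM S ζ Z := hb d hd0 hdtop
    _ ≤ d * (psiM S ζ Z + 1) := by gcongr; exact le_self_add
    _ = (psiM S ζ Z + 1) * (ε / (psiM S ζ Z + 1)) := by rw [hd, mul_comm]
    _ ≤ ε := ENNReal.mul_div_le
  have hμBinf : μ Binf = 0 := measure_mono_null inter_subset_right hinf
  have hψBinf : psiM S ζ Binf = 0 := measure_mono_null inter_subset_right hψW
  -- the key two-sided estimate for a fixed ratio t
  have key : ∀ t : ℝ≥0∞, 1 < t → t ≠ ∞ →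
      μ B ≤ t * (∫⁻ x in B, fedDensity μ S ζ x ∂(psiM S ζ)) ∧
      (∫⁻ x in B, fedDensity μ S ζ x ∂(psiM S ζ)) ≤ t * μ B := by
    intro t ht httop
    have ht0 : t ≠ 0 := (one_pos.trans ht).ne'
    have hz0 : ∀ k : ℤ, t ^ k ≠ 0 := fun k => (ENNReal.zpow_pos ht0 httop k).ne'
    have hztop : ∀ k : ℤ, t ^ k ≠ ∞ := fun k => (ENNReal.zpow_lt_top ht0 httop k).ne
    have hzsucc : ∀ k : ℤ, t ^ (k + 1) = t * t ^ k := fun k => by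
      rw [ENNReal.zpow_add ht0 httop k 1, zpow_one, mul_comm]
    set Bk : ℤ → Set X := fun k =>
      B ∩ (A.indicator (fedDensity μ S ζ)) ⁻¹' (Ioc (t ^ k) (t ^ (k + 1))) with hBkdef
    have hBkmem : ∀ (k : ℤ) (x : X), x ∈ Bk k ↔
        x ∈ B ∧ fedDensity μ S ζ x ∈ Ioc (t ^ k) (t ^ (k + 1)):= by
      intro k x
      constructor
      · rintro ⟨h1, h2⟩
        rw [mem_preimage, indicator_of_mem (hBA h1)] at h2
        exact ⟨h1, h2⟩
      · rintro ⟨h1, h2⟩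
        exact ⟨h1, by rw [mem_preimage, indicator_of_mem (hBA h1)]; exact h2⟩
    have hBkmeas : ∀ k, MeasurableSet (Bk k) :=
      fun k => hB.inter (hFmeas measurableSet_Ioc)
    have hBksubB : ∀ k, Bk k ⊆ B := fun k => inter_subset_left
    have hIocdisj : ∀ k m : ℤ, k < m →
        Disjoint (Ioc (t ^ k) (t ^ (k + 1))) (Ioc (t ^ m) (t ^ (m + 1))) := by
      intro k m hkm
      refine Set.disjoint_left.2 ?_
      rintro x ⟨_, hx2⟩ ⟨hx3, _⟩
      exact absurd (lt_of_le_of_lt (hx2.trans (ENNReal.zpow_le_of_le ht.le (by omega))) hx3)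
        (lt_irrefl x)
    have hBkdisj : Pairwise (Function.onFun Disjoint Bk) := by
      intro k m hkm
      rcases lt_or_gt_of_ne hkm with h | h
      · exact ((hIocdisj k m h).preimage _).mono inter_subset_right inter_subset_right
      · exact (((hIocdisj m k h).preimage _).symm).mono inter_subset_right inter_subset_right
    have hcov : B ⊆ Bz ∪ (Binf ∪ ⋃ k, Bk k) := by
      intro x hx
      by_cases h0x : fedDensity μ S ζ x = 0
      · exact Or.inl ⟨hx, hBA hx, h0x⟩
      by_cases hinfx : fedDensity μ S ζ x = ∞
      · exact Or.inr (Or.inl ⟨hx, hBA hx, hinfx⟩)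
      obtain ⟨k, hk⟩ := ENNReal.exists_mem_Ioc_zpow h0x hinfx ht httop
      exact Or.inr (Or.inr (mem_iUnion.2 ⟨k, (hBkmem k x).2 ⟨hx, hk⟩⟩))
    -- measure decomposition
    have hμsum : μ B = ∑' k : ℤ, μ (Bk k) := by
      apply le_antisymm
      · calc μ B ≤ μ (Bz ∪ (Binf ∪ ⋃ k, Bk k)) := measure_mono hcov
        _ ≤ μ Bz + (μ Binf + μ (⋃ k, Bk k)) :=
            (measure_union_le _ _).trans (by gcongr; exact measure_union_le _ _)
        _ = μ (⋃ k, Bk k) := by rw [hμBz, hμBinf, zero_add, zero_add]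
        _ ≤ ∑' k : ℤ, μ (Bk k) := measure_iUnion_le _
      · rw [← measure_iUnion hBkdisj hBkmeas]
        exact measure_mono (iUnion_subset hBksubB)
    -- per-level estimates
    have hμle : ∀ k : ℤ, μ (Bk k) ≤ t ^ (k + 1) * psiM S ζ (Bk k) := by
      intro k
      have h1 := claimA_le μ S ζ hζ (Bk k) (t ^ (k + 1)) (hz0 _) (hztop _)
        (fun x hx => ((hBkmem k x).1 hx).2.2)
      rwa [← hψap (hBkmeas k)] at h1
    have hψle : ∀ k : ℤ, t ^ k * psiM S ζ (Bk k) ≤ μ (Bk k) := by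
      intro k
      have h1 := claimB μ S ζ hS hζ c η hctop.ne hη0.ne' hηtop.ne hdbl hσ (Bk k)
        (hBkmeas k) (t ^ k) (hz0 _) (hztop _) (fun x hx => ((hBkmem k x).1 hx).2.1)
      rwa [← hψap (hBkmeas k)] at h1
    -- integral decomposition
    have hunion_le : ∀ s u : Set X, (∫⁻ x in s ∪ u, A.indicator (fedDensity μ S ζ) x ∂(psiM S ζ))
        ≤ (∫⁻ x in s, A.indicator (fedDensity μ S ζ) x ∂(psiM S ζ)) +
          ∫⁻ x in u, A.indicator (fedDensity μ S ζ) x ∂(psiM S ζ) := by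
      intro s u
      rw [← lintegral_add_measure]
      exact lintegral_mono' (Measure.restrict_union_le s u) le_rfl
    have hJcongr : (∫⁻ x in B, fedDensity μ S ζ x ∂(psiM S ζ)) =
        ∫⁻ x in B, A.indicator (fedDensity μ S ζ) x ∂(psiM S ζ) := by
      refine lintegral_congr_ae ?_
      filter_upwards [ae_restrict_mem hB] with x hx
      rw [indicator_of_mem (hBA hx)]
    have hIBz : (∫⁻ x in Bz, A.indicator (fedDensity μ S ζ) x ∂(psiM S ζ)) = 0 := by
      have h1 : ∀ᵐ x ∂((psiM S ζ).restrict Bz),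
          A.indicator (fedDensity μ S ζ) x = (0 : ℝ≥0∞) := by
        filter_upwards [ae_restrict_mem hBzmeas] with x hx
        rw [indicator_of_mem hx.2.1]
        exact hx.2.2
      rw [lintegral_congr_ae h1, lintegral_zero]
    have hIBinf : (∫⁻ x in Binf, A.indicator (fedDensity μ S ζ) x ∂(psiM S ζ)) = 0 := by
      rw [Measure.restrict_eq_zero.2 hψBinf, lintegral_zero_measure]
    have hIunion : (∫⁻ x in ⋃ k : ℤ, Bk k, A.indicator (fedDensity μ S ζ) x ∂(psiM S ζ)) =
        ∑' k : ℤ, ∫⁻ x in Bk k, A.indicator (fedDensity μ S ζ) x ∂(psiM S ζ) :=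
      lintegral_iUnion hBkmeas hBkdisj _
    have hJeq : (∫⁻ x in B, fedDensity μ S ζ x ∂(psiM S ζ)) =
        ∑' k : ℤ, ∫⁻ x in Bk k, A.indicator (fedDensity μ S ζ) x ∂(psiM S ζ) := by
      rw [hJcongr]
      apply le_antisymm
      · calc (∫⁻ x in B, A.indicator (fedDensity μ S ζ) x ∂(psiM S ζ))
            ≤ ∫⁻ x in Bz ∪ (Binf ∪ ⋃ k : ℤ, Bk k),
              A.indicator (fedDensity μ S ζ) x ∂(psiM S ζ) := lintegral_mono_set hcov
        _ ≤ (∫⁻ x in Bz, A.indicator (fedDensity μ S ζ) x ∂(psiM S ζ)) +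
            ((∫⁻ x in Binf, A.indicator (fedDensity μ S ζ) x ∂(psiM S ζ)) +
              ∫⁻ x in ⋃ k : ℤ, Bk k, A.indicator (fedDensity μ S ζ) x ∂(psiM S ζ)) :=
            (hunion_le _ _).trans (by gcongr; exact hunion_le _ _)
        _ = ∑' k : ℤ, ∫⁻ x in Bk k, A.indicator (fedDensity μ S ζ) x ∂(psiM S ζ) := by
            rw [hIBz, hIBinf, hIunion, zero_add, zero_add]
      · rw [← hIunion]
        exact lintegral_mono_set (iUnion_subset hBksubB)
    have hIle : ∀ k : ℤ, (∫⁻ x in Bk k, A.indicator (fedDensity μ S ζ) x ∂(psiM S ζ)) ≤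
        t ^ (k + 1) * psiM S ζ (Bk k) := by
      intro k
      calc (∫⁻ x in Bk k, A.indicator (fedDensity μ S ζ) x ∂(psiM S ζ))
          ≤ ∫⁻ _x in Bk k, t ^ (k + 1) ∂(psiM S ζ) := by
            refine lintegral_mono_ae ?_
            filter_upwards [ae_restrict_mem (hBkmeas k)] with x hx
            rw [indicator_of_mem (hBA hx.1)]
            exact ((hBkmem k x).1 hx).2.2
      _ = t ^ (k + 1) * psiM S ζ (Bk k) := setLIntegral_const _ _
    have hIge : ∀ k : ℤ, t ^ k * psiM S ζ (Bk k) ≤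
        ∫⁻ x in Bk k, A.indicator (fedDensity μ S ζ) x ∂(psiM S ζ) := by
      intro k
      calc t ^ k * psiM S ζ (Bk k) = ∫⁻ _x in Bk k, t ^ k ∂(psiM S ζ) :=
            (setLIntegral_const _ _).symm
      _ ≤ ∫⁻ x in Bk k, A.indicator (fedDensity μ S ζ) x ∂(psiM S ζ) := by
            refine lintegral_mono_ae ?_
            filter_upwards [ae_restrict_mem (hBkmeas k)] with x hx
            rw [indicator_of_mem (hBA hx.1)]
            exact (((hBkmem k x).1 hx).2.1).le
    constructor
    · calc μ B = ∑' k : ℤ, μ (Bk k) := hμsum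
      _ ≤ ∑' k : ℤ, t ^ (k + 1) * psiM S ζ (Bk k) := ENNReal.tsum_le_tsum hμle
      _ = ∑' k : ℤ, t * (t ^ k * psiM S ζ (Bk k)) :=
          tsum_congr fun k => by rw [hzsucc, mul_assoc]
      _ ≤ ∑' k : ℤ, t * ∫⁻ x in Bk k, A.indicator (fedDensity μ S ζ) x ∂(psiM S ζ) :=
          ENNReal.tsum_le_tsum fun k => mul_le_mul_right (hIge k) t
      _ = t * ∑' k : ℤ, ∫⁻ x in Bk k, A.indicator (fedDensity μ S ζ) x ∂(psiM S ζ) :=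
          ENNReal.tsum_mul_left
      _ = t * ∫⁻ x in B, fedDensity μ S ζ x ∂(psiM S ζ) := by rw [← hJeq]
    · calc (∫⁻ x in B, fedDensity μ S ζ x ∂(psiM S ζ))
          = ∑' k : ℤ, ∫⁻ x in Bk k, A.indicator (fedDensity μ S ζ) x ∂(psiM S ζ) := hJeq
      _ ≤ ∑' k : ℤ, t ^ (k + 1) * psiM S ζ (Bk k) := ENNReal.tsum_le_tsum hIle
      _ = ∑' k : ℤ, t * (t ^ k * psiM S ζ (Bk k)) :=
          tsum_congr fun k => by rw [hzsucc, mul_assoc]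
      _ ≤ ∑' k : ℤ, t * μ (Bk k) :=
          ENNReal.tsum_le_tsum fun k => mul_le_mul_right (hψle k) t
      _ = t * ∑' k : ℤ, μ (Bk k) := ENNReal.tsum_mul_left
      _ = t * μ B := by rw [← hμsum]
  exact le_antisymm
    (le_of_forall_one_lt_mul fun t ht httop => (key t ht httop).1)
    (le_of_forall_one_lt_mul fun t ht httop => (key t ht httop).2)
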